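/- If a binary form q of degree d lies on a tangent line to the Veronese curve but not on the curve itself — concretely, if q = x^{d−1} y (up to change of coordinates) — then the Waring rank of q equals d. -/

import Mathlib

open MvPolynomial Finset

noncomputable section

def linForm (K : Type) [Field K] (c : Fin 2 → K) : MvPolynomial (Fin 2) K :=
  C (c 0) * X 0 + C (c 1) * X 1

/-- `α` is not a scalar multiple of `β` (for nonzero vectors: distinct points of `ℙ¹`). -/
def NonProp (K : Type) [Field K] (α β : Fin 2 → K) : Prop := ∀ t : K, α ≠ t • β

/-- The Waring rank of a binary form: the least `r` such that `q` is a sum of `r`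
`d`-th powers of linear forms. -/
def waringRank (K : Type) [Field K] (d : ℕ) (q : MvPolynomial (Fin 2) K) : ℕ :=
  sInf {r : ℕ | ∃ L : Fin r → Fin 2 → K, q = ∑ i, linForm K (L i) ^ d}

theorem geom_aux (K : Type) [Field K] {d : ℕ} (hd : 2 ≤ d) {ζ : K}
    (hζ : IsPrimitiveRoot ζ d) (e : ℕ) :
    ∑ j : Fin d, (ζ ^ e) ^ (j : ℕ) = if d ∣ e then (d : K) else 0 := by
  rw [Fin.sum_univ_eq_sum_range]
  by_cases h : d ∣ e
  · simp [hζ.pow_eq_one_iff_dvd e |>.mpr h, if_pos h]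
  · have hne : ζ ^ e ≠ 1 := fun he => h ((hζ.pow_eq_one_iff_dvd e).mp he)
    rw [geom_sum_eq hne, if_neg h, ← pow_mul, mul_comm e d, pow_mul, hζ.pow_eq_one,
      one_pow, sub_self, zero_div]

theorem upper (K : Type) [Field K] [IsAlgClosed K] [CharZero K] (d : ℕ) (hd : 2 ≤ d) :
    ∃ L : Fin d → Fin 2 → K,
      (X 0 : MvPolynomial (Fin 2) K) ^ (d - 1) * X 1 = ∑ i, linForm K (L i) ^ d := by
  have hd0 : (d : K) ≠ 0 := Nat.cast_ne_zero.mpr (by omega)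
  haveI : NeZero ((d : K)) := ⟨hd0⟩
  obtain ⟨ζ, hζ⟩ := HasEnoughRootsOfUnity.exists_primitiveRoot K d
  have hroot : ∀ j : Fin d, ∃ μ : K, μ ^ d = ζ ^ ((j : ℕ) * (d - 1)) / (d : K) ^ 2 :=
    fun j => IsAlgClosed.exists_pow_nat_eq _ (by omega)
  choose μ hμ using hroot
  refine ⟨fun j => ![μ j, μ j * ζ ^ (j : ℕ)], ?_⟩
  have hlin : ∀ j : Fin d, linForm K ![μ j, μ j * ζ ^ (j : ℕ)] ^ d
      = ∑ k ∈ range (d + 1),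
          C ((ζ ^ (2 * d - 1 - k)) ^ (j : ℕ) * (d.choose k : K) / (d : K) ^ 2) *
            (X 0 ^ k * X 1 ^ (d - k)) := by
    intro j
    have h1 : linForm K ![μ j, μ j * ζ ^ (j : ℕ)] = C (μ j) * (X 0 + C (ζ ^ (j : ℕ)) * X 1) := by
      simp [linForm]; ring
    rw [h1, mul_pow, ← C_pow, hμ, add_pow, Finset.mul_sum]
    refine Finset.sum_congr rfl fun k hk => ?_
    have hk' : k ≤ d := by simpa using Nat.lt_succ_iff.mp (Finset.mem_range.mp hk)
    have hζpow : ζ ^ ((j : ℕ) * (d - 1)) * (ζ ^ (j : ℕ)) ^ (d - k)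
        = (ζ ^ (2 * d - 1 - k)) ^ (j : ℕ) := by
      rw [← pow_mul, ← pow_mul, ← pow_add]
      congr 1
      rw [← Nat.mul_add, Nat.mul_comm]
      congr 1
      omega
    rw [mul_pow, ← C_pow, ← hζpow]
    have hco : ζ ^ ((j : ℕ) * (d - 1)) * (ζ ^ (j : ℕ)) ^ (d - k) * (d.choose k : K) / (d : K) ^ 2
        = (ζ ^ ((j : ℕ) * (d - 1)) / (d : K) ^ 2) * ((ζ ^ (j : ℕ)) ^ (d - k)) * (d.choose k : K) := by
      ring
    rw [hco, C_mul, C_mul, C_eq_coe_nat]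
    ring
  rw [Finset.sum_congr rfl (fun j _ => hlin j), Finset.sum_comm]
  have hterm : ∀ k ∈ range (d + 1),
      (∑ j : Fin d, C ((ζ ^ (2 * d - 1 - k)) ^ (j : ℕ) * (d.choose k : K) / (d : K) ^ 2) *
        ((X 0 : MvPolynomial (Fin 2) K) ^ k * X 1 ^ (d - k)))
      = C ((if d ∣ 2 * d - 1 - k then (d : K) else 0) * ((d.choose k : K) / (d : K) ^ 2)) *
          ((X 0 : MvPolynomial (Fin 2) K) ^ k * X 1 ^ (d - k)) := by
    intro k _
    rw [← Finset.sum_mul, ← map_sum]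
    congr 2
    rw [← geom_aux K hd hζ (2 * d - 1 - k), Finset.sum_mul]
    exact Finset.sum_congr rfl fun j _ => mul_div_assoc _ _ _
  refine Eq.symm ((Finset.sum_congr rfl hterm).trans ?_)
  rw [Finset.sum_eq_single_of_mem (d - 1) (by simp)]
  · symm
    have h1 : d ∣ 2 * d - 1 - (d - 1) := by
      have : 2 * d - 1 - (d - 1) = d := by omega
      rw [this]
    rw [if_pos h1]
    have h2 : d.choose (d - 1) = d := by
      rw [Nat.choose_symm (show 1 ≤ d by omega), Nat.choose_one_right]
    rw [h2]
    have h3 : (d : K) * ((d : K) / (d : K) ^ 2) = 1 := by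
      field_simp
    have h4 : d - (d - 1) = 1 := by omega
    rw [h3, h4, map_one, one_mul, pow_one]
  · intro k hk hne
    have hk' : k ≤ d := by simpa using Nat.lt_succ_iff.mp (Finset.mem_range.mp hk)
    have hnd : ¬ d ∣ 2 * d - 1 - k := by
      rintro ⟨t, ht⟩
      rcases t with _ | _ | t
      · omega
      · omega
      · have h5 : d * (t + 1 + 1) = d * t + 2 * d := by ring
        have h6 : (0:ℕ) ≤ d * t := Nat.zero_le _
        omega
    rw [if_neg hnd, zero_mul, map_zero, zero_mul]

theorem coeff_pow_lin (K : Type) [Field K] (b c : K) (d k : ℕ) (hk : k ≤ d) :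
    ((Polynomial.C b + Polynomial.C c * Polynomial.X) ^ d).coeff k
      = (d.choose k : K) * b ^ (d - k) * c ^ k := by
  rw [add_pow]
  rw [Polynomial.finset_sum_coeff]
  have hterm : ∀ m ∈ range (d + 1),
      ((Polynomial.C b) ^ m * (Polynomial.C c * Polynomial.X) ^ (d - m) *
        ((d.choose m : ℕ) : Polynomial K)).coeff k
      = if d - m = k then b ^ m * c ^ (d - m) * (d.choose m : K) else 0 := by
    intro m _
    rw [mul_pow, ← Polynomial.C_pow, ← Polynomial.C_pow, ← Polynomial.C_eq_natCast]
    have : Polynomial.C (b ^ m) * (Polynomial.C (c ^ (d - m)) * Polynomial.X ^ (d - m)) *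
        Polynomial.C ((d.choose m : K))
        = Polynomial.C (b ^ m * c ^ (d - m) * (d.choose m : K)) * Polynomial.X ^ (d - m) := by
      rw [Polynomial.C_mul, Polynomial.C_mul]; ring
    rw [this, Polynomial.coeff_C_mul, Polynomial.coeff_X_pow]
    rcases eq_or_ne (d - m) k with h | h
    · simp [h]
    · simp [h, Ne.symm h]
  rw [Finset.sum_congr rfl hterm,
    Finset.sum_eq_single_of_mem (d - k) (by simp) (fun m hm hne => by
      rw [if_neg (by simp at hm; omega)])]
  rw [if_pos (by omega)]
  have h1 : d - (d - k) = k := by omega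
  have h2 : d.choose (d - k) = d.choose k := Nat.choose_symm hk
  rw [h1, h2]
  ring

theorem moments (K : Type) [Field K] [CharZero K] (d r : ℕ) (hd : 2 ≤ d)
    (L : Fin r → Fin 2 → K)
    (hrep : (X 0 : MvPolynomial (Fin 2) K) ^ (d - 1) * X 1 = ∑ i, linForm K (L i) ^ d) :
    ∀ k ≤ d, (∑ i, (L i 0) ^ (d - k) * (L i 1) ^ k)
      = if k = 1 then ((d : K))⁻¹ else 0 := by
  intro k hk
  have happ := congrArg (aeval (R := K) ![(1 : Polynomial K), Polynomial.X]) hrep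
  simp only [map_sum, map_mul, map_pow, aeval_X, linForm, map_add, algHom_C,
    Matrix.cons_val_zero, Matrix.cons_val_one, Matrix.head_cons, mul_one, one_pow] at happ
  have hco := congrArg (fun p => Polynomial.coeff p k) happ
  simp only [Polynomial.finset_sum_coeff, Polynomial.algebraMap_eq, one_mul] at hco
  rw [Polynomial.coeff_X] at hco
  have hterm : ∀ i ∈ (univ : Finset (Fin r)),
      ((Polynomial.C (L i 0) + Polynomial.C (L i 1) * Polynomial.X) ^ d).coeff k
        = (d.choose k : K) * ((L i 0) ^ (d - k) * (L i 1) ^ k) := by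
    intro i _
    rw [coeff_pow_lin K _ _ d k hk]; ring
  rw [Finset.sum_congr rfl hterm, ← Finset.mul_sum] at hco
  have hch : ((d.choose k : ℕ) : K) ≠ 0 := by
    exact_mod_cast Nat.cast_ne_zero.mpr (Nat.choose_pos hk).ne'
  rcases eq_or_ne k 1 with h1 | h1
  · subst h1
    rw [if_pos rfl]
    rw [if_pos rfl] at hco
    rw [Nat.choose_one_right] at hco
    have hd0 : (d : K) ≠ 0 := Nat.cast_ne_zero.mpr (by omega)
    rw [inv_eq_one_div, eq_div_iff hd0, mul_comm]
    exact hco.symm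
  · rw [if_neg h1]
    rw [if_neg (fun h => h1 h.symm)] at hco
    exact (mul_eq_zero.mp hco.symm).resolve_left hch

theorem lower (K : Type) [Field K] [CharZero K] (d r : ℕ) (hd : 2 ≤ d)
    (L : Fin r → Fin 2 → K)
    (hrep : (X 0 : MvPolynomial (Fin 2) K) ^ (d - 1) * X 1 = ∑ i, linForm K (L i) ^ d) :
    d ≤ r := by
  classical
  by_contra hlt
  push_neg at hlt
  have hP := moments K d r hd L hrep
  set P : ℕ → K := fun k => ∑ i, (L i 0) ^ (d - k) * (L i 1) ^ k with hPdef
  -- the distinct normalized direction points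
  set nm : Fin r → K × K := fun i => if L i 1 = 0 then (1, 0) else (L i 0 / L i 1, 1) with hnm
  set S : Finset (Fin r) := univ.filter (fun i => ¬ (L i 0 = 0 ∧ L i 1 = 0)) with hS
  set Pts : Finset (K × K) := S.image nm with hPts
  set m : ℕ := Pts.card with hm
  have hmr : m ≤ r := by
    rw [hm, hPts]
    calc (S.image nm).card ≤ S.card := Finset.card_image_le
    _ ≤ (univ : Finset (Fin r)).card := by rw [hS]; exact Finset.card_filter_le _ _
    _ = r := by simp
  have hmd : m ≤ d - 1 := by omega
  have hpts_cases : ∀ p ∈ Pts, p = (1, 0) ∨ (p.2 = 1 ∧ p ≠ (1, 0)) := by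
    intro p hp
    rw [hPts] at hp
    obtain ⟨i, hi, rfl⟩ := Finset.mem_image.mp hp
    by_cases h : L i 1 = 0
    · left; simp [hnm, h]
    · right
      refine ⟨by simp [hnm, h], ?_⟩
      rw [hnm]
      simp only [h, if_false, if_neg h]
      intro hcontra
      have := congrArg Prod.snd hcontra
      simp at this
  -- key relation
  have hrel : ∀ a, a + m ≤ d →
      ∑ A ∈ Pts.powerset,
        (∏ p ∈ A, p.2) * (∏ p ∈ Pts \ A, (-p.1)) * P (d - (a + A.card)) = 0 := by
    intro a ha
    have hzero : ∀ i : Fin r,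
        (L i 0) ^ a * (L i 1) ^ (d - m - a) * ∏ p ∈ Pts, (p.2 * L i 0 - p.1 * L i 1) = 0 := by
      intro i
      by_cases hi : i ∈ S
      · refine mul_eq_zero_of_right _ (Finset.prod_eq_zero (i := nm i) ?_ ?_)
        · rw [hPts]; exact Finset.mem_image_of_mem nm hi
        · by_cases h : L i 1 = 0
          · simp [hnm, h]
          · rw [hnm]
            simp only [if_neg h]
            field_simp
            simp
      · have hb : L i 0 = 0 ∧ L i 1 = 0 := by
          by_contra hcon
          exact hi (by rw [hS]; exact Finset.mem_filter.mpr ⟨Finset.mem_univ i, hcon⟩)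
        rcases Nat.eq_zero_or_pos a with ha0 | ha0
        · have hne : d - m - a ≠ 0 := by omega
          rw [hb.2, zero_pow hne]
          ring
        · rw [hb.1, zero_pow (by omega)]
          ring
    have hsum : ∑ i : Fin r,
        (L i 0) ^ a * (L i 1) ^ (d - m - a) * ∏ p ∈ Pts, (p.2 * L i 0 - p.1 * L i 1) = 0 :=
      Finset.sum_eq_zero fun i _ => hzero i
    rw [← hsum]
    have hexp : ∀ i : Fin r,
        (L i 0) ^ a * (L i 1) ^ (d - m - a) * ∏ p ∈ Pts, (p.2 * L i 0 - p.1 * L i 1)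
        = ∑ A ∈ Pts.powerset, (∏ p ∈ A, p.2) * (∏ p ∈ Pts \ A, (-p.1)) *
            ((L i 0) ^ (a + A.card) * (L i 1) ^ (d - (a + A.card))) := by
      intro i
      have h1 : ∏ p ∈ Pts, (p.2 * L i 0 - p.1 * L i 1)
          = ∑ A ∈ Pts.powerset, (∏ p ∈ A, p.2 * L i 0) * (∏ p ∈ Pts \ A, -(p.1 * L i 1)) := by
        rw [← Finset.prod_add]
        exact Finset.prod_congr rfl fun p _ => by ring
      rw [h1, Finset.mul_sum]
      refine Finset.sum_congr rfl fun A hA => ?_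
      have hAc : A.card ≤ m := hm ▸ Finset.card_le_card (Finset.mem_powerset.mp hA)
      have h2 : ∏ p ∈ A, (p.2 * L i 0) = (∏ p ∈ A, p.2) * (L i 0) ^ A.card := by
        rw [Finset.prod_mul_distrib, Finset.prod_const]
      have h3 : ∏ p ∈ Pts \ A, -(p.1 * L i 1)
          = (∏ p ∈ Pts \ A, -p.1) * (L i 1) ^ (m - A.card) := by
        have : ∀ p ∈ Pts \ A, -(p.1 * L i 1) = (-p.1) * (L i 1) := fun p _ => by ring
        rw [Finset.prod_congr rfl this, Finset.prod_mul_distrib, Finset.prod_const,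
          Finset.card_sdiff_of_subset (Finset.mem_powerset.mp hA), ← hm]
      rw [h2, h3]
      have he : d - (a + A.card) = (d - m - a) + (m - A.card) := by omega
      rw [he]
      simp only [pow_add]
      ring
    rw [Finset.sum_congr rfl (fun i _ => hexp i), Finset.sum_comm]
    refine Finset.sum_congr rfl fun A hA => ?_
    rw [← Finset.mul_sum, hPdef]
    congr 1
    have harg : d - (d - (a + A.card)) = a + A.card := by
      have hAc : A.card ≤ m := hm ▸ Finset.card_le_card (Finset.mem_powerset.mp hA)
      omega
    simp only []
    rw [harg]
  -- conclusions
  have hd1 : (d : K) ≠ 0 := Nat.cast_ne_zero.mpr (by omega)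
  have hPd : ∀ k, k ≤ d → k ≠ 1 → P k = 0 := fun k hk h1 => by
    rw [hPdef]; simp only []; rw [hP k hk, if_neg h1]
  have hP1 : P 1 = (d:K)⁻¹ := by
    rw [hPdef]; simp only []; rw [hP 1 (by omega), if_pos rfl]
  have h10 : ((1:K), (0:K)) ∈ Pts := by
    have side1 : ∀ A ∈ Pts.powerset, A ≠ Pts →
        (∏ p ∈ A, p.2) * (∏ p ∈ Pts \ A, (-p.1)) * P (d - (d - 1 - m + A.card)) = 0 := by
      intro A hA hne
      have hsub := Finset.mem_powerset.mp hA
      have hclt : A.card < m := hm ▸ Finset.card_lt_card (lt_of_le_of_ne hsub hne)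
      rw [hPd _ (by omega) (by omega), mul_zero]
    have rel1 := hrel (d - 1 - m) (by omega)
    rw [Finset.sum_eq_single_of_mem Pts (Finset.mem_powerset_self Pts) side1] at rel1
    rw [Finset.sdiff_self, Finset.prod_empty, mul_one] at rel1
    have harg : d - (d - 1 - m + Pts.card) = 1 := by rw [← hm]; omega
    rw [harg, hP1] at rel1
    have hz : (∏ p ∈ Pts, p.2) = 0 :=
      (mul_eq_zero.mp rel1).resolve_right (inv_ne_zero hd1)
    obtain ⟨p, hp, hp2⟩ := Finset.prod_eq_zero_iff.mp hz
    rcases hpts_cases p hp with h | h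
    · exact h ▸ hp
    · exact absurd hp2 (by rw [h.1]; exact one_ne_zero)
  have hm1 : 1 ≤ m := by
    rw [hm]; exact Finset.card_pos.mpr ⟨_, h10⟩
  have hA0card : (Pts.erase ((1:K),(0:K))).card = m - 1 := by
    rw [Finset.card_erase_of_mem h10, hm]
  have side2 : ∀ A ∈ Pts.powerset, A ≠ Pts.erase ((1:K),(0:K)) →
      (∏ p ∈ A, p.2) * (∏ p ∈ Pts \ A, (-p.1)) * P (d - (d - m + A.card)) = 0 := by
    intro A hA hne
    have hsub := Finset.mem_powerset.mp hA
    by_cases h10A : ((1:K),(0:K)) ∈ A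
    · rw [Finset.prod_eq_zero h10A rfl, zero_mul, zero_mul]
    · have hsubA0 : A ⊆ Pts.erase ((1:K),(0:K)) := Finset.subset_erase.mpr ⟨hsub, h10A⟩
      have hclt : A.card < m - 1 := hA0card ▸ Finset.card_lt_card (lt_of_le_of_ne hsubA0 hne)
      rw [hPd _ (by omega) (by omega), mul_zero]
  have rel2 := hrel (d - m) (by omega)
  rw [Finset.sum_eq_single_of_mem (Pts.erase ((1:K),(0:K)))
    (Finset.mem_powerset.mpr (Finset.erase_subset _ _)) side2] at rel2
  have hone : (∏ p ∈ Pts.erase ((1:K),(0:K)), p.2) = 1 :=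
    Finset.prod_eq_one fun p hp =>
      ((hpts_cases p (Finset.mem_of_mem_erase hp)).resolve_left (Finset.ne_of_mem_erase hp)).1
  have hsd : Pts \ Pts.erase ((1:K),(0:K)) = {((1:K),(0:K))} := Finset.sdiff_erase_self h10
  have harg2 : d - (d - m + (Pts.erase ((1:K),(0:K))).card) = 1 := by
    rw [hA0card]; omega
  rw [hone, hsd, Finset.prod_singleton, harg2, hP1, one_mul] at rel2
  simp at rel2
  omega

/-- A form on a tangent line of the Veronese curve but not on the curve, concretely
`x^{d-1}y`, has Waring rank `d`. -/
theorem stmt16 (K : Type) [Field K] [IsAlgClosed K] [CharZero K] (d : ℕ) (hd : 2 ≤ d) :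
    waringRank K d ((X 0 : MvPolynomial (Fin 2) K) ^ (d - 1) * X 1) = d := by
  obtain ⟨L, hL⟩ := upper K d hd
  have hmem : d ∈ {r : ℕ | ∃ L : Fin r → Fin 2 → K,
      (X 0 : MvPolynomial (Fin 2) K) ^ (d - 1) * X 1 = ∑ i, linForm K (L i) ^ d} := ⟨L, hL⟩
  refine le_antisymm (Nat.sInf_le hmem) (le_csInf ⟨d, hmem⟩ ?_)
  rintro r ⟨L', hL'⟩
  exact lower K d r hd L' hL'
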